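/- For every iteration t ≥ 1 and every δ > 0, the potential function F decreases up to delayed terms: F(x^{t+1}, x^t) − F(x^t, x^{t−1}) ≤ (3L/2 − γ/2 + Lδτ)‖Δ^{(t)}‖² − (ρ/2)‖Δ^{(t−1)}‖² + (L/δ) Σ_{k=1}^{τ} ‖Δ^{(t−k)}‖². -/

import Mathlib

open scoped RealInnerProductSpace

lemma aux_mono {q q' : ℝ → ℝ} (hd : ∀ s, HasDerivAt q (q' s) s)
    (hpos : ∀ s ∈ Set.Icc (0:ℝ) 1, 0 ≤ q' s) : q 0 ≤ q 1 := by
  have hmono : MonotoneOn q (Set.Icc (0:ℝ) 1) := by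
    apply monotoneOn_of_deriv_nonneg (convex_Icc 0 1)
    · exact (continuous_iff_continuousAt.2 fun s => (hd s).continuousAt).continuousOn
    · exact fun s _ => (hd s).differentiableAt.differentiableWithinAt
    · intro s hs
      rw [(hd s).deriv]
      exact hpos s (Set.mem_of_mem_of_subset hs (by rw [interior_Icc]; exact Set.Ioo_subset_Icc_self))
  exact hmono (by norm_num) (by norm_num) (by norm_num)

lemma aux_line {p : ℕ} (f : EuclideanSpace ℝ (Fin p) → ℝ)
    (hf : Differentiable ℝ f) (a v : EuclideanSpace ℝ (Fin p)) (s : ℝ) :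
    HasDerivAt (fun r : ℝ => f (a + r • v)) ⟪gradient f (a + s • v), v⟫ s := by
  have hc : HasDerivAt (fun r : ℝ => a + r • v) v s := by
    simpa using ((hasDerivAt_id s).smul_const v).const_add a
  have hg := (hf (a + s • v)).hasGradientAt
  rw [hasGradientAt_iff_hasFDerivAt] at hg
  exact hg.comp_hasDerivAt s hc

/-- two-sided descent lemma -/
lemma aux_descent {p : ℕ} {C : ℝ} (f : EuclideanSpace ℝ (Fin p) → ℝ)
    (hf : Differentiable ℝ f)
    (hlip : ∀ u w : EuclideanSpace ℝ (Fin p), ‖gradient f u - gradient f w‖ ≤ C * ‖u - w‖)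
    (a b : EuclideanSpace ℝ (Fin p)) :
    |f b - f a - ⟪gradient f a, b - a⟫| ≤ C / 2 * ‖b - a‖ ^ 2 := by
  set v := b - a with hv
  have hab' : a + v = b := by rw [hv]; abel
  set G : ℝ → ℝ := fun s => ⟪gradient f (a + s • v), v⟫ with hGdef
  have hG0 : G 0 = ⟪gradient f a, v⟫ := by rw [hGdef]; simp
  have hG : ∀ s ∈ Set.Icc (0:ℝ) 1, |G s - G 0| ≤ C * ‖v‖ ^ 2 * s := by
    intro s hs
    rw [hGdef]
    simp only [zero_smul, add_zero]
    have h1 : (⟪gradient f (a + s • v), v⟫ : ℝ) - ⟪gradient f a, v⟫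
        = ⟪gradient f (a + s • v) - gradient f a, v⟫ := by rw [inner_sub_left]
    rw [h1]
    calc |⟪gradient f (a + s • v) - gradient f a, v⟫|
        ≤ ‖gradient f (a + s • v) - gradient f a‖ * ‖v‖ := abs_real_inner_le_norm _ _
      _ ≤ (C * ‖(a + s • v) - a‖) * ‖v‖ :=
          mul_le_mul_of_nonneg_right (hlip _ _) (norm_nonneg _)
      _ = C * ‖v‖ ^ 2 * s := by
          simp only [add_sub_cancel_left, norm_smul, Real.norm_eq_abs, abs_of_nonneg hs.1]
          ring
  have hline : ∀ s : ℝ, HasDerivAt (fun r : ℝ => f (a + r • v)) (G s) s :=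
    fun s => aux_line f hf a v s
  have hq2 : ∀ s : ℝ, HasDerivAt (fun s : ℝ => C/2 * ‖v‖^2 * s^2 + s * G 0)
      (C * ‖v‖^2 * s + G 0) s := by
    intro s
    have := ((hasDerivAt_pow 2 s).const_mul (C/2 * ‖v‖^2)).add ((hasDerivAt_id s).mul_const (G 0))
    exact this.congr_deriv (by push_cast; ring)
  -- upper bound
  have hup : f b - f a - G 0 ≤ C / 2 * ‖v‖ ^ 2 := by
    have key := aux_mono
      (q := fun s => C/2 * ‖v‖^2 * s^2 + s * G 0 + (f a - f (a + s • v)))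
      (q' := fun s => C * ‖v‖^2 * s + G 0 - G s)
      (fun s => by
        have := (hq2 s).add ((hasDerivAt_const s (f a)).sub (hline s))
        exact this.congr_deriv (by ring))
      (fun s hs => by
        have := (abs_le.1 (hG s hs)).2
        linarith)
    simp only [zero_smul, add_zero, one_smul, zero_pow, mul_zero, zero_mul, hab',
      one_pow, mul_one, one_mul, sub_self, zero_add] at key
    nlinarith [key]
  -- lower bound
  have hlo : -(C / 2 * ‖v‖ ^ 2) ≤ f b - f a - G 0 := by
    have key := aux_mono
      (q := fun s => C/2 * ‖v‖^2 * s^2 + s * G 0 + (f (a + s • v) - f a - 2 * (s * G 0)))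
      (q' := fun s => C * ‖v‖^2 * s + G 0 + (G s - 2 * G 0))
      (fun s => by
        have h3 : HasDerivAt (fun s : ℝ => 2 * (s * G 0)) (2 * G 0) s := by
          simpa using ((hasDerivAt_id s).mul_const (G 0)).const_mul 2
        exact (hq2 s).add (((hline s).sub_const (f a)).sub h3))
      (fun s hs => by
        have := (abs_le.1 (hG s hs)).1
        linarith)
    simp only [zero_smul, add_zero, one_smul, zero_pow, mul_zero, zero_mul, hab',
      one_pow, mul_one, one_mul, sub_self, zero_add] at key
    nlinarith [key]
  rw [← hG0]
  rw [abs_le]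
  exact ⟨hlo, hup⟩

set_option maxHeartbeats 1000000 in
theorem stmt_3
    {p m τ : ℕ} (hp : 1 ≤ p) (hm : 0 < m)
    {L ρ γ : ℝ}
    (hL : 0 < L) (hρ : 0 < ρ) (hγ : 0 < γ)
    (Lf : Fin m → EuclideanSpace ℝ (Fin p) → ℝ)
    (hdiff : ∀ j, Differentiable ℝ (Lf j))
    (hlip : ∀ j (u v : EuclideanSpace ℝ (Fin p)), ‖gradient (Lf j) u - gradient (Lf j) v‖ ≤ L * ‖u - v‖)
    (h : EuclideanSpace ℝ (Fin p) → ℝ)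
    (hconv : ConvexOn ℝ Set.univ h)
    (hstrong : ∀ z : EuclideanSpace ℝ (Fin p), StrongConvexOn Set.univ γ (fun y => h y + ρ / 2 * ‖y - z‖ ^ 2))
    (tj : ℕ → Fin m → ℕ)
    (htj : ∀ t j, t - τ ≤ tj t j ∧ tj t j ≤ t)
    (x : ℕ → EuclideanSpace ℝ (Fin p))
    (hupdate : ∀ t, ∀ y : EuclideanSpace ℝ (Fin p),
      Lf ⟨0, hm⟩ (x (t + 1)) + h (x (t + 1)) + ρ / 2 * ‖x (t + 1) - x t‖ ^ 2 +
          ⟪((m : ℝ)⁻¹ • ∑ j, gradient (Lf j) (x (tj t j))) - gradient (Lf ⟨0, hm⟩) (x (tj t ⟨0, hm⟩)), x (t + 1) - x t⟫ ≤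
        Lf ⟨0, hm⟩ y + h y + ρ / 2 * ‖y - x t‖ ^ 2 +
          ⟪((m : ℝ)⁻¹ • ∑ j, gradient (Lf j) (x (tj t j))) - gradient (Lf ⟨0, hm⟩) (x (tj t ⟨0, hm⟩)), y - x t⟫)
    (Δ : ℤ → EuclideanSpace ℝ (Fin p))
    (hΔ : ∀ s : ℤ, 0 ≤ s → Δ s = x (s.toNat + 1) - x s.toNat)
    (hΔneg : ∀ s : ℤ, s < 0 → Δ s = 0)
    (t : ℕ) (ht : 1 ≤ t) (δ : ℝ) (hδ : 0 < δ)
    :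
    (((m : ℝ)⁻¹ * ∑ j, Lf j (x (t + 1))) + ρ / 2 * ‖x (t + 1) - x t‖ ^ 2 + h (x (t + 1))) - (((m : ℝ)⁻¹ * ∑ j, Lf j (x t)) + ρ / 2 * ‖x t - x (t - 1)‖ ^ 2 + h (x t)) ≤
      (3 * L / 2 - γ / 2 + L * δ * τ) * ‖Δ (t : ℤ)‖ ^ 2 - ρ / 2 * ‖Δ ((t : ℤ) - 1)‖ ^ 2 +
        L / δ * ∑ k ∈ Finset.Icc 1 τ, ‖Δ ((t : ℤ) - (k : ℤ))‖ ^ 2 := by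
  classical
  have hmR : (0:ℝ) < (m:ℝ) := by exact_mod_cast hm
  -- identify Δ with differences of x
  have hΔt : Δ (t:ℤ) = x (t+1) - x t := by
    have h1 := hΔ (t:ℤ) (by positivity)
    simpa using h1
  have hΔt1 : Δ ((t:ℤ) - 1) = x t - x (t - 1) := by
    have h0 : (0:ℤ) ≤ (t:ℤ) - 1 := by
      have : (1:ℤ) ≤ (t:ℤ) := by exact_mod_cast ht
      omega
    have h1 := hΔ ((t:ℤ) - 1) h0
    have h2 : ((t:ℤ) - 1).toNat = t - 1 := by omega
    rw [h2] at h1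
    have h3 : t - 1 + 1 = t := by omega
    rw [h3] at h1
    exact h1
  set S := ∑ k ∈ Finset.Icc 1 τ, ‖Δ ((t:ℤ) - (k:ℤ))‖ with hSdef
  have hS0 : 0 ≤ S := Finset.sum_nonneg fun _ _ => norm_nonneg _
  -- lag bound
  have hlag : ∀ j : Fin m, ‖x t - x (tj t j)‖ ≤ S := by
    intro j
    obtain ⟨hj1, hj2⟩ := htj t j
    have htel : x t - x (tj t j) = ∑ i ∈ Finset.Ico (tj t j) t, (x (i+1) - x i) := by
      rw [Finset.sum_Ico_eq_sub _ hj2, Finset.sum_range_sub, Finset.sum_range_sub]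
      abel
    have h1 : ‖x t - x (tj t j)‖ ≤ ∑ i ∈ Finset.Ico (tj t j) t, ‖x (i+1) - x i‖ := by
      rw [htel]; exact norm_sum_le _ _
    have h2 : ∑ i ∈ Finset.Ico (tj t j) t, ‖x (i+1) - x i‖
        = ∑ k ∈ Finset.Icc 1 (t - tj t j), ‖Δ ((t:ℤ) - (k:ℤ))‖ := by
      refine Finset.sum_nbij' (fun i => t - i) (fun k => t - k) ?_ ?_ ?_ ?_ ?_
      · intro i hi; simp only [Finset.mem_Ico] at hi; simp only [Finset.mem_Icc]; omega
      · intro k hk; simp only [Finset.mem_Icc] at hk; simp only [Finset.mem_Ico]; omega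
      · intro i hi; simp only [Finset.mem_Ico] at hi; show t - (t - i) = i; omega
      · intro k hk; simp only [Finset.mem_Icc] at hk; show t - (t - k) = k; omega
      · intro i hi
        simp only [Finset.mem_Ico] at hi
        have e1 : ((t:ℤ) - ((t - i : ℕ):ℤ)) = (i:ℤ) := by omega
        rw [e1, hΔ (i:ℤ) (by positivity)]
        simp
    calc ‖x t - x (tj t j)‖ ≤ _ := h1
      _ = _ := h2
      _ ≤ S := by
        rw [hSdef]
        refine Finset.sum_le_sum_of_subset_of_nonneg ?_ fun _ _ _ => norm_nonneg _
        exact Finset.Icc_subset_Icc_right (by omega)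
  have hglag : ∀ j : Fin m, ‖gradient (Lf j) (x t) - gradient (Lf j) (x (tj t j))‖ ≤ L * S :=
    fun j => (hlip j _ _).trans (mul_le_mul_of_nonneg_left (hlag j) hL.le)
  -- the delayed-gradient inner product bound
  have hWsplit : (⟪(m:ℝ)⁻¹ • ∑ j, gradient (Lf j) (x t), x (t+1) - x t⟫ : ℝ)
      - ⟪gradient (Lf ⟨0,hm⟩) (x t), x (t+1) - x t⟫
      - ⟪((m:ℝ)⁻¹ • ∑ j, gradient (Lf j) (x (tj t j))) - gradient (Lf ⟨0,hm⟩) (x (tj t ⟨0,hm⟩)), x (t+1) - x t⟫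
      ≤ 2 * L * S * ‖x (t+1) - x t‖ := by
    have hvec : ((m:ℝ)⁻¹ • ∑ j, gradient (Lf j) (x t)) - gradient (Lf ⟨0,hm⟩) (x t)
        - (((m:ℝ)⁻¹ • ∑ j, gradient (Lf j) (x (tj t j))) - gradient (Lf ⟨0,hm⟩) (x (tj t ⟨0,hm⟩)))
        = ((m:ℝ)⁻¹ • ∑ j, (gradient (Lf j) (x t) - gradient (Lf j) (x (tj t j))))
          - (gradient (Lf ⟨0,hm⟩) (x t) - gradient (Lf ⟨0,hm⟩) (x (tj t ⟨0,hm⟩))) := by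
      rw [Finset.sum_sub_distrib, smul_sub]; abel
    have hn1 : ‖(m:ℝ)⁻¹ • ∑ j, (gradient (Lf j) (x t) - gradient (Lf j) (x (tj t j)))‖ ≤ L * S := by
      rw [norm_smul, Real.norm_eq_abs, abs_of_nonneg (inv_nonneg.2 hmR.le)]
      have hs : ‖∑ j, (gradient (Lf j) (x t) - gradient (Lf j) (x (tj t j)))‖
          ≤ (m:ℝ) * (L * S) := by
        calc ‖∑ j, (gradient (Lf j) (x t) - gradient (Lf j) (x (tj t j)))‖
            ≤ ∑ j, ‖gradient (Lf j) (x t) - gradient (Lf j) (x (tj t j))‖ := norm_sum_le _ _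
          _ ≤ ∑ _j : Fin m, (L * S) := Finset.sum_le_sum fun j _ => hglag j
          _ = (m:ℝ) * (L * S) := by
              rw [Finset.sum_const, Finset.card_univ, Fintype.card_fin, nsmul_eq_mul]
      calc (m:ℝ)⁻¹ * ‖∑ j, (gradient (Lf j) (x t) - gradient (Lf j) (x (tj t j)))‖
          ≤ (m:ℝ)⁻¹ * ((m:ℝ) * (L * S)) := mul_le_mul_of_nonneg_left hs (inv_nonneg.2 hmR.le)
        _ = L * S := by field_simp
    have hnorm : ‖((m:ℝ)⁻¹ • ∑ j, gradient (Lf j) (x t)) - gradient (Lf ⟨0,hm⟩) (x t)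
        - (((m:ℝ)⁻¹ • ∑ j, gradient (Lf j) (x (tj t j))) - gradient (Lf ⟨0,hm⟩) (x (tj t ⟨0,hm⟩)))‖
        ≤ 2 * L * S := by
      rw [hvec]
      calc ‖_ - _‖ ≤ ‖(m:ℝ)⁻¹ • ∑ j, (gradient (Lf j) (x t) - gradient (Lf j) (x (tj t j)))‖
            + ‖gradient (Lf ⟨0,hm⟩) (x t) - gradient (Lf ⟨0,hm⟩) (x (tj t ⟨0,hm⟩))‖ := norm_sub_le _ _
        _ ≤ L * S + L * S := add_le_add hn1 (hglag _)
        _ = 2 * L * S := by ring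
    calc (⟪(m:ℝ)⁻¹ • ∑ j, gradient (Lf j) (x t), x (t+1) - x t⟫ : ℝ)
          - ⟪gradient (Lf ⟨0,hm⟩) (x t), x (t+1) - x t⟫
          - ⟪((m:ℝ)⁻¹ • ∑ j, gradient (Lf j) (x (tj t j))) - gradient (Lf ⟨0,hm⟩) (x (tj t ⟨0,hm⟩)), x (t+1) - x t⟫
        = ⟪((m:ℝ)⁻¹ • ∑ j, gradient (Lf j) (x t)) - gradient (Lf ⟨0,hm⟩) (x t)
            - (((m:ℝ)⁻¹ • ∑ j, gradient (Lf j) (x (tj t j))) - gradient (Lf ⟨0,hm⟩) (x (tj t ⟨0,hm⟩))),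
            x (t+1) - x t⟫ := by simp only [inner_sub_left]
      _ ≤ ‖((m:ℝ)⁻¹ • ∑ j, gradient (Lf j) (x t)) - gradient (Lf ⟨0,hm⟩) (x t)
            - (((m:ℝ)⁻¹ • ∑ j, gradient (Lf j) (x (tj t j))) - gradient (Lf ⟨0,hm⟩) (x (tj t ⟨0,hm⟩)))‖
            * ‖x (t+1) - x t‖ := real_inner_le_norm _ _
      _ ≤ 2 * L * S * ‖x (t+1) - x t‖ := mul_le_mul_of_nonneg_right hnorm (norm_nonneg _)
  -- Cauchy-Schwarz with δ
  have hδsum : 2 * L * S * ‖x (t+1) - x t‖ ≤ L * δ * (τ:ℝ) * ‖x (t+1) - x t‖^2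
      + L / δ * ∑ k ∈ Finset.Icc 1 τ, ‖Δ ((t:ℤ) - (k:ℤ))‖^2 := by
    have key : ∀ k ∈ Finset.Icc 1 τ, 2 * (‖Δ ((t:ℤ)-(k:ℤ))‖ * ‖x (t+1) - x t‖)
        ≤ δ * ‖x (t+1) - x t‖^2 + δ⁻¹ * ‖Δ ((t:ℤ)-(k:ℤ))‖^2 := by
      intro k _
      have h2 : 0 ≤ δ⁻¹ * (δ * ‖x (t+1) - x t‖ - ‖Δ ((t:ℤ)-(k:ℤ))‖)^2 := by positivity
      have h3 : δ⁻¹ * (δ * ‖x (t+1) - x t‖ - ‖Δ ((t:ℤ)-(k:ℤ))‖)^2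
          = δ * ‖x (t+1) - x t‖^2 - 2 * (‖Δ ((t:ℤ)-(k:ℤ))‖ * ‖x (t+1) - x t‖)
            + δ⁻¹ * ‖Δ ((t:ℤ)-(k:ℤ))‖^2 := by
        field_simp
        ring
      rw [h3] at h2
      linarith
    have hsum := Finset.sum_le_sum key
    have hlhs : ∑ k ∈ Finset.Icc 1 τ, (2 * (‖Δ ((t:ℤ)-(k:ℤ))‖ * ‖x (t+1) - x t‖))
        = 2 * (S * ‖x (t+1) - x t‖) := by
      rw [hSdef, Finset.sum_mul, ← Finset.mul_sum]
    have hrhs : ∑ k ∈ Finset.Icc 1 τ, (δ * ‖x (t+1) - x t‖^2 + δ⁻¹ * ‖Δ ((t:ℤ)-(k:ℤ))‖^2)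
        = (τ:ℝ) * (δ * ‖x (t+1) - x t‖^2) + δ⁻¹ * ∑ k ∈ Finset.Icc 1 τ, ‖Δ ((t:ℤ)-(k:ℤ))‖^2 := by
      rw [Finset.sum_add_distrib, Finset.sum_const, Nat.card_Icc, ← Finset.mul_sum, nsmul_eq_mul]
      norm_num
    rw [hlhs, hrhs] at hsum
    have h4 := mul_le_mul_of_nonneg_left hsum hL.le
    calc 2 * L * S * ‖x (t+1) - x t‖ = L * (2 * (S * ‖x (t+1) - x t‖)) := by ring
      _ ≤ L * ((τ:ℝ) * (δ * ‖x (t+1) - x t‖^2) + δ⁻¹ * ∑ k ∈ Finset.Icc 1 τ, ‖Δ ((t:ℤ)-(k:ℤ))‖^2) := h4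
      _ = L * δ * (τ:ℝ) * ‖x (t+1) - x t‖^2
          + L / δ * ∑ k ∈ Finset.Icc 1 τ, ‖Δ ((t:ℤ)-(k:ℤ))‖^2 := by
        rw [div_eq_mul_inv]; ring
  -- average descent over all j
  have hperj : ∀ j : Fin m, Lf j (x (t+1)) ≤ Lf j (x t)
      + ⟪gradient (Lf j) (x t), x (t+1) - x t⟫ + L/2 * ‖x (t+1) - x t‖^2 := by
    intro j
    have hd := (abs_le.1 (aux_descent (Lf j) (hdiff j) (hlip j) (x t) (x (t+1)))).2
    linarith
  have havg : (m:ℝ)⁻¹ * ∑ j, Lf j (x (t+1)) ≤ (m:ℝ)⁻¹ * ∑ j, Lf j (x t)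
      + ⟪(m:ℝ)⁻¹ • ∑ j, gradient (Lf j) (x t), x (t+1) - x t⟫ + L/2 * ‖x (t+1) - x t‖^2 := by
    have hsum := Finset.sum_le_sum fun j (_ : j ∈ Finset.univ) => hperj j
    have hsum_rhs : ∑ j : Fin m, (Lf j (x t) + ⟪gradient (Lf j) (x t), x (t+1) - x t⟫
          + L/2 * ‖x (t+1) - x t‖^2)
        = ∑ j, Lf j (x t) + ∑ j, (⟪gradient (Lf j) (x t), x (t+1) - x t⟫:ℝ)
          + (m:ℝ) * (L/2 * ‖x (t+1) - x t‖^2) := by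
      rw [Finset.sum_add_distrib, Finset.sum_add_distrib, Finset.sum_const, Finset.card_univ,
        Fintype.card_fin, nsmul_eq_mul]
    rw [hsum_rhs] at hsum
    have hip : (⟪(m:ℝ)⁻¹ • ∑ j, gradient (Lf j) (x t), x (t+1) - x t⟫:ℝ)
        = (m:ℝ)⁻¹ * ∑ j, (⟪gradient (Lf j) (x t), x (t+1) - x t⟫:ℝ) := by
      rw [real_inner_smul_left, sum_inner]
    rw [hip]
    have hminv : (m:ℝ)⁻¹ * (m:ℝ) = 1 := inv_mul_cancel₀ hmR.ne'
    calc (m:ℝ)⁻¹ * ∑ j, Lf j (x (t+1))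
        ≤ (m:ℝ)⁻¹ * (∑ j, Lf j (x t) + ∑ j, (⟪gradient (Lf j) (x t), x (t+1) - x t⟫:ℝ)
            + (m:ℝ) * (L/2 * ‖x (t+1) - x t‖^2)) := mul_le_mul_of_nonneg_left hsum (inv_nonneg.2 hmR.le)
      _ = (m:ℝ)⁻¹ * ∑ j, Lf j (x t) + (m:ℝ)⁻¹ * ∑ j, (⟪gradient (Lf j) (x t), x (t+1) - x t⟫:ℝ)
            + ((m:ℝ)⁻¹ * (m:ℝ)) * (L/2 * ‖x (t+1) - x t‖^2) := by ring
      _ = _ := by rw [hminv]; ring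
  -- reverse descent for j0
  have hrev : Lf ⟨0,hm⟩ (x t) ≤ Lf ⟨0,hm⟩ (x (t+1))
      - ⟪gradient (Lf ⟨0,hm⟩) (x t), x (t+1) - x t⟫ + L/2 * ‖x (t+1) - x t‖^2 := by
    have hd := (abs_le.1 (aux_descent (Lf ⟨0,hm⟩) (hdiff _) (hlip _) (x t) (x (t+1)))).1
    linarith
  -- the prox-step claim
  have claim1 : Lf ⟨0,hm⟩ (x (t+1)) + h (x (t+1)) + ρ/2 * ‖x (t+1) - x t‖^2
      + ⟪((m:ℝ)⁻¹ • ∑ j, gradient (Lf j) (x (tj t j))) - gradient (Lf ⟨0,hm⟩) (x (tj t ⟨0,hm⟩)), x (t+1) - x t⟫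
      ≤ Lf ⟨0,hm⟩ (x t) + h (x t) + (L - γ)/2 * ‖x (t+1) - x t‖^2 := by
    have main : ∀ lam : ℝ, 0 < lam → lam ≤ 1/2 →
        Lf ⟨0,hm⟩ (x (t+1)) + h (x (t+1)) + ρ/2 * ‖x (t+1) - x t‖^2
          + ⟪((m:ℝ)⁻¹ • ∑ j, gradient (Lf j) (x (tj t j))) - gradient (Lf ⟨0,hm⟩) (x (tj t ⟨0,hm⟩)), x (t+1) - x t⟫
        ≤ Lf ⟨0,hm⟩ (x t) + h (x t) + (1 - lam) * ((L - γ)/2 * ‖x (t+1) - x t‖^2) := by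
      intro lam hlam0 hlam2
      have hlam1 : (0:ℝ) ≤ 1 - lam := by linarith
      set y := lam • x t + (1 - lam) • x (t+1) with hy
      have hyx : y - x t = (1 - lam) • (x (t+1) - x t) := by rw [hy]; module
      have hyx1 : x t - y = (-(1 - lam)) • (x (t+1) - x t) := by rw [hy]; module
      have hyx2 : x (t+1) - y = lam • (x (t+1) - x t) := by rw [hy]; module
      have hup : Lf ⟨0,hm⟩ (x (t+1)) + h (x (t+1)) + ρ/2 * ‖x (t+1) - x t‖^2
          + ⟪((m:ℝ)⁻¹ • ∑ j, gradient (Lf j) (x (tj t j))) - gradient (Lf ⟨0,hm⟩) (x (tj t ⟨0,hm⟩)), x (t+1) - x t⟫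
          ≤ Lf ⟨0,hm⟩ y + h y + ρ/2 * ‖y - x t‖^2
          + ⟪((m:ℝ)⁻¹ • ∑ j, gradient (Lf j) (x (tj t j))) - gradient (Lf ⟨0,hm⟩) (x (tj t ⟨0,hm⟩)), y - x t⟫ :=
        hupdate t y
      have hsc : h y + ρ/2 * ‖y - x t‖^2
          ≤ lam • (h (x t) + ρ/2 * ‖x t - x t‖^2)
            + (1 - lam) • (h (x (t+1)) + ρ/2 * ‖x (t+1) - x t‖^2)
            - lam * (1 - lam) * (γ/2 * ‖x t - x (t+1)‖^2) :=
        (hstrong (x t)).2 (Set.mem_univ _) (Set.mem_univ _) hlam0.le hlam1 (by ring)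
      -- smoothness of Lf j0
      have hd1 := abs_le.1 (aux_descent (Lf ⟨0,hm⟩) (hdiff _) (hlip _) y (x t))
      have hd2 := abs_le.1 (aux_descent (Lf ⟨0,hm⟩) (hdiff _) (hlip _) y (x (t+1)))
      rw [hyx1] at hd1
      rw [hyx2] at hd2
      have e1 : (⟪gradient (Lf ⟨0,hm⟩) y, (-(1 - lam)) • (x (t+1) - x t)⟫:ℝ)
          = (-(1 - lam)) * ⟪gradient (Lf ⟨0,hm⟩) y, x (t+1) - x t⟫ := real_inner_smul_right _ _ _
      have e2 : ‖(-(1 - lam)) • (x (t+1) - x t)‖^2 = (1 - lam)^2 * ‖x (t+1) - x t‖^2 := by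
        rw [norm_smul, Real.norm_eq_abs, abs_neg, abs_of_nonneg hlam1]; ring
      have e3 : (⟪gradient (Lf ⟨0,hm⟩) y, lam • (x (t+1) - x t)⟫:ℝ)
          = lam * ⟪gradient (Lf ⟨0,hm⟩) y, x (t+1) - x t⟫ := real_inner_smul_right _ _ _
      have e4 : ‖lam • (x (t+1) - x t)‖^2 = lam^2 * ‖x (t+1) - x t‖^2 := by
        rw [norm_smul, Real.norm_eq_abs, abs_of_nonneg hlam0.le]; ring
      rw [e1, e2] at hd1
      rw [e3, e4] at hd2
      have hd1' := mul_le_mul_of_nonneg_left hd1.1 hlam0.le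
      have hd2' := mul_le_mul_of_nonneg_left hd2.1 hlam1
      have hsmooth : Lf ⟨0,hm⟩ y ≤ lam * Lf ⟨0,hm⟩ (x t) + (1 - lam) * Lf ⟨0,hm⟩ (x (t+1))
          + L/2 * (lam * (1 - lam)) * ‖x (t+1) - x t‖^2 := by linarith [hd1', hd2']
      -- rewrite remaining vector quantities as scalars
      have hin1 : (⟪((m:ℝ)⁻¹ • ∑ j, gradient (Lf j) (x (tj t j))) - gradient (Lf ⟨0,hm⟩) (x (tj t ⟨0,hm⟩)), y - x t⟫:ℝ)
          = (1 - lam) * ⟪((m:ℝ)⁻¹ • ∑ j, gradient (Lf j) (x (tj t j))) - gradient (Lf ⟨0,hm⟩) (x (tj t ⟨0,hm⟩)), x (t+1) - x t⟫ := by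
        rw [hyx, real_inner_smul_right]
      have hn1 : ‖y - x t‖^2 = (1 - lam)^2 * ‖x (t+1) - x t‖^2 := by
        rw [hyx, norm_smul, Real.norm_eq_abs, abs_of_nonneg hlam1]; ring
      rw [hin1, hn1] at hup
      rw [hn1] at hsc
      rw [sub_self (x t), norm_zero, norm_sub_rev (x t) (x (t+1)), smul_eq_mul, smul_eq_mul] at hsc
      -- combine
      have hfin : lam * (Lf ⟨0,hm⟩ (x (t+1)) + h (x (t+1)) + ρ/2 * ‖x (t+1) - x t‖^2
          + ⟪((m:ℝ)⁻¹ • ∑ j, gradient (Lf j) (x (tj t j))) - gradient (Lf ⟨0,hm⟩) (x (tj t ⟨0,hm⟩)), x (t+1) - x t⟫)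
          ≤ lam * (Lf ⟨0,hm⟩ (x t) + h (x t) + (1 - lam) * ((L - γ)/2 * ‖x (t+1) - x t‖^2)) := by
        linarith [hup, hsc, hsmooth]
      exact le_of_mul_le_mul_left hfin hlam0
    refine le_of_forall_sub_le ?_
    intro ε hε
    have hc0 : (0:ℝ) < |(L - γ)/2 * ‖x (t+1) - x t‖^2| + 1 := by positivity
    set lam := min (1/2) (ε / (|(L - γ)/2 * ‖x (t+1) - x t‖^2| + 1)) with hlamdef
    have h1 : 0 < lam := lt_min (by norm_num) (div_pos hε hc0)
    have h2 : lam ≤ 1/2 := min_le_left _ _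
    have h3 := main lam h1 h2
    have h5 : lam ≤ ε / (|(L - γ)/2 * ‖x (t+1) - x t‖^2| + 1) := min_le_right _ _
    have h6 : lam * |(L - γ)/2 * ‖x (t+1) - x t‖^2|
        ≤ (ε / (|(L - γ)/2 * ‖x (t+1) - x t‖^2| + 1)) * |(L - γ)/2 * ‖x (t+1) - x t‖^2| :=
      mul_le_mul_of_nonneg_right h5 (abs_nonneg _)
    have h7 : (ε / (|(L - γ)/2 * ‖x (t+1) - x t‖^2| + 1)) * |(L - γ)/2 * ‖x (t+1) - x t‖^2| ≤ ε := by
      rw [div_mul_eq_mul_div, div_le_iff₀ hc0]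
      nlinarith [abs_nonneg ((L - γ)/2 * ‖x (t+1) - x t‖^2), hε]
    have h8 : -(lam * ((L - γ)/2 * ‖x (t+1) - x t‖^2)) ≤ lam * |(L - γ)/2 * ‖x (t+1) - x t‖^2| := by
      have h9 := neg_abs_le ((L - γ)/2 * ‖x (t+1) - x t‖^2)
      nlinarith [h1.le]
    linarith
  -- final assembly
  rw [hΔt, hΔt1]
  linarith [claim1, havg, hrev, hWsplit, hδsum]
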